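/- Monotonicity of generalized fidelity under projection-type maps: for subnormalized states ρ, σ (positive semidefinite with trace ≤ 1) and a positive semidefinite operator Π ≤ 1, the generalized fidelity satisfies F̄(ΠρΠ, ΠσΠ) ≥ F̄(ρ, σ); equivalently the purified distance satisfies P(ΠρΠ, ΠσΠ) ≤ P(ρ, σ). -/

import Mathlib

open Matrix
open scoped ComplexOrder Classical

noncomputable section

/-- PSD square root (junk value 0 if not PSD). -/
def psdSqrt {n : Type*} [Fintype n] [DecidableEq n] (A : Matrix n n ℂ) : Matrix n n ℂ :=
  if h : A.PosSemidef then
    (h.1.eigenvectorUnitary : Matrix n n ℂ) * diagonal ((↑) ∘ (√·) ∘ h.1.eigenvalues) *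
      (star h.1.eigenvectorUnitary : Matrix n n ℂ)
  else 0

/-- trace norm `‖A‖₁ = tr √(A Aᴴ)`. -/
def trNorm {n : Type*} [Fintype n] [DecidableEq n] (A : Matrix n n ℂ) : ℝ :=
  ((psdSqrt (A * A.conjTranspose)).trace).re

/-- generalized fidelity `F̄(ρ,σ) = ‖√ρ√σ‖₁ + √((1 − tr ρ)(1 − tr σ))`
on subnormalized states. -/
def genFid {n : Type*} [Fintype n] [DecidableEq n] (A B : Matrix n n ℂ) : ℝ :=
  trNorm (psdSqrt A * psdSqrt B) +
    Real.sqrt ((1 - A.trace.re) * (1 - B.trace.re))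

/-- purified distance `P(ρ,σ) = √(1 − F̄(ρ,σ)²)`. -/
def purDist {n : Type*} [Fintype n] [DecidableEq n] (A B : Matrix n n ℂ) : ℝ :=
  Real.sqrt (1 - (genFid A B) ^ 2)

section AuxLemmas
set_option linter.unusedSectionVars false
variable {n : Type*} [Fintype n] [DecidableEq n]
open scoped MatrixOrder

lemma psdSqrt_eq {A : Matrix n n ℂ} (h : A.PosSemidef) : psdSqrt A = CFC.sqrt A := by
  rw [CFC.sqrt_eq_cfc, cfc_nnreal_eq_real _ A (Matrix.nonneg_iff_posSemidef.mpr h), h.1.cfc_eq,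
    IsHermitian.cfc, Unitary.conjStarAlgAut_apply, psdSqrt, dif_pos h]
  congr 3
  ext1 i
  simp only [Function.comp_apply, Real.coe_sqrt, Real.coe_toNNReal', max_eq_left (h.eigenvalues_nonneg i)]
  rfl

lemma psdSqrt_posSemidef (A : Matrix n n ℂ) : (psdSqrt A).PosSemidef := by
  unfold psdSqrt; split
  · rename_i h
    have := Matrix.nonneg_iff_posSemidef.mp (CFC.sqrt_nonneg A)
    rwa [← psdSqrt_eq h, psdSqrt, dif_pos h] at this
  · exact Matrix.PosSemidef.zero

lemma psdSqrt_mul_self {A : Matrix n n ℂ} (h : A.PosSemidef) :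
    psdSqrt A * psdSqrt A = A := by
  rw [psdSqrt_eq h]; exact CFC.sqrt_mul_sqrt_self A (Matrix.nonneg_iff_posSemidef.mpr h)

lemma psdSqrt_herm (A : Matrix n n ℂ) : (psdSqrt A)ᴴ = psdSqrt A :=
  (psdSqrt_posSemidef A).1

lemma trace_re_nonneg {A : Matrix n n ℂ} (h : A.PosSemidef) : 0 ≤ A.trace.re := by
  rw [Matrix.trace, Complex.re_sum]
  refine Finset.sum_nonneg fun i _ => ?_
  have := h.dotProduct_mulVec_nonneg (Pi.single i 1)
  have h2 : star (Pi.single i 1 : n → ℂ) ⬝ᵥ A *ᵥ Pi.single i 1 = A i i := by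
    simp [dotProduct, Matrix.mulVec, Pi.single_apply]
  rw [h2] at this
  exact (Complex.le_def.mp this).1

lemma trace_ctm (X Y : Matrix n n ℂ) :
    (Xᴴ * Y).trace = ∑ j : n, ∑ i : n, (starRingEnd ℂ) (X j i) * Y j i := by
  simp only [Matrix.trace, Matrix.diag, Matrix.mul_apply, Matrix.conjTranspose_apply]
  rw [Finset.sum_comm]
  rfl

lemma trace_conjTranspose_mul_self_re (X : Matrix n n ℂ) :
    ((Xᴴ * X).trace).re = ∑ p : n × n, ‖X p.1 p.2‖ ^ 2 := by
  rw [trace_ctm, Fintype.sum_prod_type]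
  rw [Complex.re_sum]
  refine Finset.sum_congr rfl fun j _ => ?_
  rw [Complex.re_sum]
  refine Finset.sum_congr rfl fun i _ => ?_
  rw [mul_comm, Complex.mul_conj]
  simp [Complex.normSq_eq_norm_sq, ← Complex.ofReal_pow]

lemma re_trace_conjTranspose_mul_le (X Y : Matrix n n ℂ) :
    ((Xᴴ * Y).trace).re ≤
      Real.sqrt ((Xᴴ * X).trace).re * Real.sqrt ((Yᴴ * Y).trace).re := by
  classical
  set x : EuclideanSpace ℂ (n × n) := WithLp.toLp 2 (fun p : n × n => X p.1 p.2) with hx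
  set y : EuclideanSpace ℂ (n × n) := WithLp.toLp 2 (fun p : n × n => Y p.1 p.2) with hy
  have hinner : (Xᴴ * Y).trace = inner ℂ x y := by
    rw [trace_ctm]
    simp only [PiLp.inner_apply, RCLike.inner_apply, Fintype.sum_prod_type, hx, hy]
    exact Finset.sum_congr rfl fun _ _ => Finset.sum_congr rfl fun _ _ => mul_comm _ _
  have h1 : ((Xᴴ * Y).trace).re ≤ ‖(inner ℂ x y : ℂ)‖ := by
    rw [hinner]; exact Complex.re_le_norm _
  refine h1.trans ((norm_inner_le_norm x y).trans ?_)
  rw [EuclideanSpace.norm_eq, EuclideanSpace.norm_eq]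
  rw [trace_conjTranspose_mul_self_re, trace_conjTranspose_mul_self_re]

lemma exists_unitary_polar (M : Matrix n n ℂ) :
    ∃ U : Matrix n n ℂ, U ∈ Matrix.unitaryGroup n ℂ ∧ M = psdSqrt (M * Mᴴ) * U := by
  have hH : (M * Mᴴ).PosSemidef := posSemidef_self_mul_conjTranspose M
  set V : Matrix n n ℂ := (hH.1.eigenvectorUnitary : Matrix n n ℂ) with hVdef
  set d : n → ℝ := hH.1.eigenvalues with hddef
  have hd0 : ∀ i, 0 ≤ d i := hH.eigenvalues_nonneg
  have hVmem : V ∈ Matrix.unitaryGroup n ℂ := hH.1.eigenvectorUnitary.2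
  have hVV : V * star V = 1 := (Matrix.mem_unitaryGroup_iff).mp hVmem
  have hVV' : star V * V = 1 := (Matrix.mem_unitaryGroup_iff').mp hVmem
  set X : Matrix n n ℂ := star V * M with hXdef
  have hXX : X * Xᴴ = diagonal (RCLike.ofReal ∘ d) := by
    have hspec : M * Mᴴ = V * diagonal (RCLike.ofReal ∘ d) * star V := by
      conv_lhs => rw [hH.1.spectral_theorem]
      rw [Unitary.conjStarAlgAut_apply]
    have h1 : X * Xᴴ = star V * (M * Mᴴ) * V := by
      rw [hXdef, Matrix.conjTranspose_mul]
      simp only [Matrix.star_eq_conjTranspose, Matrix.conjTranspose_conjTranspose]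
      noncomm_ring
    rw [h1, hspec]
    simp only [← Matrix.mul_assoc, Matrix.star_eq_conjTranspose] at hVV' ⊢
    rw [hVV', Matrix.one_mul, Matrix.mul_assoc, hVV', Matrix.mul_one]
  have hrow : ∀ i, (∑ j, ‖X i j‖ ^ 2 : ℝ) = d i := by
    intro i
    have h2 : (X * Xᴴ) i i = (d i : ℂ) := by rw [hXX]; simp
    have h3 : (X * Xᴴ) i i = ∑ j, (‖X i j‖ ^ 2 : ℂ) := by
      simp only [Matrix.mul_apply, Matrix.conjTranspose_apply]
      refine Finset.sum_congr rfl fun j _ => ?_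
      rw [Complex.star_def, Complex.mul_conj]
      simp [Complex.normSq_eq_norm_sq, ← Complex.ofReal_pow]
    exact_mod_cast h3.symm.trans h2
  have hrow0 : ∀ i, d i = 0 → ∀ j, X i j = 0 := by
    intro i hi j
    have h4 : (∑ j, ‖X i j‖ ^ 2 : ℝ) = 0 := by rw [hrow i, hi]
    have h5 := (Finset.sum_eq_zero_iff_of_nonneg (fun j _ => sq_nonneg ‖X i j‖)).mp h4 j
      (Finset.mem_univ j)
    simpa using h5
  -- orthonormal rows on support
  set v : n → EuclideanSpace ℂ n := fun i => WithLp.toLp 2 (fun j => (((Real.sqrt (d i))⁻¹ : ℝ) : ℂ) * X i j)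
    with hvdef
  set S : Set n := {i | d i ≠ 0} with hSdef
  have hv : Orthonormal ℂ (S.restrict v) := by
    rw [orthonormal_iff_ite]
    rintro ⟨i, hi⟩ ⟨j, hj⟩
    have hinner : (inner ℂ (v i) (v j) : ℂ) =
        (((Real.sqrt (d i))⁻¹ : ℝ) : ℂ) * (((Real.sqrt (d j))⁻¹ : ℝ) : ℂ) * (X * Xᴴ) j i := by
      simp only [PiLp.inner_apply, RCLike.inner_apply, hvdef, Matrix.mul_apply,
        Matrix.conjTranspose_apply, _root_.map_mul, Complex.conj_ofReal, Complex.star_def,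
        Finset.mul_sum, PiLp.toLp_apply]
      refine Finset.sum_congr rfl fun k _ => ?_
      ring
    by_cases hij : i = j
    · subst hij
      rw [if_pos rfl]
      change inner ℂ (v i) (v i) = 1
      simp only [Set.restrict_apply, hinner, hXX]
      have : ((Real.sqrt (d i))⁻¹ : ℝ) * ((Real.sqrt (d i))⁻¹ : ℝ) * d i = 1 := by
        rw [← mul_inv]
        rw [Real.mul_self_sqrt (hd0 i)]
        exact inv_mul_cancel₀ hi
      simp only [Matrix.diagonal_apply_eq, Function.comp_apply, if_true]
      have hco : ((d i : ℝ) : ℂ) = RCLike.ofReal (d i) := rfl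
      rw [← Complex.ofReal_mul, ← hco, ← Complex.ofReal_mul, this, Complex.ofReal_one]
    · have hij' : (⟨i, hi⟩ : S) ≠ ⟨j, hj⟩ := by simpa using hij
      rw [if_neg hij']
      change inner ℂ (v i) (v j) = 0
      simp only [Set.restrict_apply, hinner, hXX]
      rw [Matrix.diagonal_apply_ne _ (fun h => hij h.symm)]
      ring
  obtain ⟨b, hb⟩ := hv.exists_orthonormalBasis_extension_of_card_eq
    (finrank_euclideanSpace (𝕜 := ℂ) (ι := n))
  set W : Matrix n n ℂ := Matrix.of (fun i j => b i j) with hWdef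
  have hWmem : W ∈ Matrix.unitaryGroup n ℂ := by
    rw [Matrix.mem_unitaryGroup_iff]
    ext i j
    have hb2 := orthonormal_iff_ite.mp b.orthonormal i j
    have : (W * star W) i j = (starRingEnd ℂ) (inner ℂ (b i) (b j)) := by
      simp only [Matrix.mul_apply, Matrix.star_apply, hWdef, Matrix.of_apply,
        PiLp.inner_apply, RCLike.inner_apply, map_sum, _root_.map_mul, Complex.star_def]
      refine Finset.sum_congr rfl fun k _ => ?_
      rw [starRingEnd_self_apply, mul_comm]
    rw [this, hb2]
    by_cases hij : i = j <;> simp [hij, Matrix.one_apply]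
  have hXW : X = diagonal ((↑) ∘ Real.sqrt ∘ d) * W := by
    ext i j
    rw [Matrix.diagonal_mul]
    by_cases hi : d i = 0
    · rw [hrow0 i hi j]
      simp [hi, Function.comp_apply]
    · have hbi : b i = v i := hb i hi
      have : W i j = (((Real.sqrt (d i))⁻¹ : ℝ) : ℂ) * X i j := by
        rw [hWdef]; simp only [Matrix.of_apply, hbi, hvdef, PiLp.toLp_apply]
      rw [this, Function.comp_apply, Function.comp_apply, ← mul_assoc]
      rw [← Complex.ofReal_mul]
      rw [mul_inv_cancel₀ (Real.sqrt_ne_zero'.mpr (lt_of_le_of_ne (hd0 i) (Ne.symm hi)))]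
      simp
  refine ⟨V * W, mul_mem hVmem hWmem, ?_⟩
  have hsq : psdSqrt (M * Mᴴ) = V * diagonal ((↑) ∘ Real.sqrt ∘ d) * star V := by
    exact dif_pos hH
  rw [hsq]
  calc M = V * X := by rw [hXdef, ← Matrix.mul_assoc, hVV, Matrix.one_mul]
    _ = V * (diagonal ((↑) ∘ Real.sqrt ∘ d) * W) := by rw [hXW]
    _ = V * diagonal ((↑) ∘ Real.sqrt ∘ d) * star V * (V * W) := by
        simp only [Matrix.mul_assoc]
        rw [← Matrix.mul_assoc (star V) V W, hVV', Matrix.one_mul]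

lemma trNorm_nonneg (M : Matrix n n ℂ) : 0 ≤ trNorm M :=
  trace_re_nonneg (psdSqrt_posSemidef _)


lemma trace_unitary_conj (E : Matrix n n ℂ) {C : Matrix n n ℂ}
    (hC : C ∈ Matrix.unitaryGroup n ℂ) : (C * E * star C).trace = E.trace := by
  rw [Matrix.trace_mul_cycle, (Matrix.mem_unitaryGroup_iff').mp hC, Matrix.one_mul]

lemma re_trace_mul_unitary_le (M : Matrix n n ℂ) {W : Matrix n n ℂ}
    (hW : W ∈ Matrix.unitaryGroup n ℂ) : ((M * W).trace).re ≤ trNorm M := by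
  obtain ⟨U, hU, hMU⟩ := exists_unitary_polar M
  have hN : (psdSqrt (M * Mᴴ)).PosSemidef := psdSqrt_posSemidef _
  have hRR : psdSqrt (psdSqrt (M * Mᴴ)) * psdSqrt (psdSqrt (M * Mᴴ)) = psdSqrt (M * Mᴴ) :=
    psdSqrt_mul_self hN
  have hCmem : U * W ∈ Matrix.unitaryGroup n ℂ := mul_mem hU hW
  have h2 := re_trace_conjTranspose_mul_le (psdSqrt (psdSqrt (M * Mᴴ)))
    (psdSqrt (psdSqrt (M * Mᴴ)) * (U * W))
  rw [psdSqrt_herm, hRR] at h2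
  have hMW : M * W =
      psdSqrt (psdSqrt (M * Mᴴ)) * (psdSqrt (psdSqrt (M * Mᴴ)) * (U * W)) := by
    conv_lhs => rw [hMU, ← hRR]
    simp only [Matrix.mul_assoc]
  rw [hMW]
  refine h2.trans ?_
  have h3 : ((psdSqrt (psdSqrt (M * Mᴴ)) * (U * W))ᴴ *
      (psdSqrt (psdSqrt (M * Mᴴ)) * (U * W))).trace = (psdSqrt (M * Mᴴ)).trace := by
    rw [Matrix.conjTranspose_mul, psdSqrt_herm,
      Matrix.mul_assoc ((U * W)ᴴ) (psdSqrt (psdSqrt (M * Mᴴ)))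
        (psdSqrt (psdSqrt (M * Mᴴ)) * (U * W)),
      ← Matrix.mul_assoc (psdSqrt (psdSqrt (M * Mᴴ))) (psdSqrt (psdSqrt (M * Mᴴ))) (U * W),
      hRR, Matrix.trace_mul_comm ((U * W)ᴴ) (psdSqrt (M * Mᴴ) * (U * W)),
      Matrix.mul_assoc (psdSqrt (M * Mᴴ)) (U * W) ((U * W)ᴴ),
      ← Matrix.star_eq_conjTranspose (U * W),
      (Matrix.mem_unitaryGroup_iff).mp hCmem, Matrix.mul_one]
  rw [h3, Real.mul_self_sqrt (trace_re_nonneg hN)]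
  exact le_of_eq rfl

lemma exists_trNorm_eq (M : Matrix n n ℂ) :
    ∃ U ∈ Matrix.unitaryGroup n ℂ, ((M * star U).trace).re = trNorm M := by
  obtain ⟨U, hU, hMU⟩ := exists_unitary_polar M
  refine ⟨U, hU, ?_⟩
  have h : M * star U = psdSqrt (M * Mᴴ) := by
    conv_lhs => rw [hMU]
    rw [Matrix.mul_assoc, (Matrix.mem_unitaryGroup_iff).mp hU, Matrix.mul_one]
  rw [h]
  rfl

lemma trNorm_triangle (X Y : Matrix n n ℂ) : trNorm (X + Y) ≤ trNorm X + trNorm Y := by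
  obtain ⟨U, hU, heq⟩ := exists_trNorm_eq (X + Y)
  have hsU : star U ∈ Matrix.unitaryGroup n ℂ := Unitary.star_mem hU
  rw [← heq, Matrix.add_mul, Matrix.trace_add, Complex.add_re]
  exact add_le_add (re_trace_mul_unitary_le X hsU) (re_trace_mul_unitary_le Y hsU)

lemma trNorm_mul_unitary (M : Matrix n n ℂ) {U : Matrix n n ℂ}
    (hU : U ∈ Matrix.unitaryGroup n ℂ) : trNorm (M * U) = trNorm M := by
  have hUU : U * star U = 1 := (Matrix.mem_unitaryGroup_iff).mp hU
  have h : M * U * (M * U)ᴴ = M * Mᴴ := by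
    rw [Matrix.conjTranspose_mul, ← Matrix.star_eq_conjTranspose U, Matrix.mul_assoc,
      ← Matrix.mul_assoc U, hUU, Matrix.one_mul]
  unfold trNorm
  rw [h]

lemma psdSqrt_conj {X U : Matrix n n ℂ} (hX : X.PosSemidef)
    (hU : U ∈ Matrix.unitaryGroup n ℂ) :
    psdSqrt (U * X * star U) = U * psdSqrt X * star U := by
  have hUU : star U * U = 1 := (Matrix.mem_unitaryGroup_iff').mp hU
  have hP : (U * psdSqrt X * star U).PosSemidef := by
    have := (psdSqrt_posSemidef X).mul_mul_conjTranspose_same U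
    rwa [← Matrix.star_eq_conjTranspose] at this
  have hXc : (U * X * star U).PosSemidef := by
    have := hX.mul_mul_conjTranspose_same U
    rwa [← Matrix.star_eq_conjTranspose] at this
  have h2 : (U * psdSqrt X * star U) ^ 2 = U * X * star U := by
    rw [pow_two]
    calc U * psdSqrt X * star U * (U * psdSqrt X * star U)
        = U * psdSqrt X * (star U * U) * (psdSqrt X * star U) := by
          simp only [Matrix.mul_assoc]
      _ = U * X * star U := by
          rw [hUU, Matrix.mul_one]
          simp only [← Matrix.mul_assoc]
          rw [Matrix.mul_assoc U (psdSqrt X) (psdSqrt X), psdSqrt_mul_self hX]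
  rw [psdSqrt_eq hXc]
  exact CFC.sqrt_unique (by rw [← pow_two]; exact h2) (Matrix.nonneg_iff_posSemidef.mpr hP)

lemma trNorm_unitary_mul (M : Matrix n n ℂ) {U : Matrix n n ℂ}
    (hU : U ∈ Matrix.unitaryGroup n ℂ) : trNorm (U * M) = trNorm M := by
  have hUU : star U * U = 1 := (Matrix.mem_unitaryGroup_iff').mp hU
  have h : U * M * (U * M)ᴴ = U * (M * Mᴴ) * star U := by
    rw [Matrix.conjTranspose_mul, ← Matrix.star_eq_conjTranspose U]
    simp only [Matrix.mul_assoc]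
  unfold trNorm
  rw [h, psdSqrt_conj (posSemidef_self_mul_conjTranspose M) hU,
    trace_unitary_conj _ hU]

lemma trNorm_conjTranspose_mul_le (C D : Matrix n n ℂ) :
    trNorm (Cᴴ * D) ≤ Real.sqrt ((Cᴴ * C).trace).re * Real.sqrt ((Dᴴ * D).trace).re := by
  obtain ⟨U, hU, heq⟩ := exists_trNorm_eq (Cᴴ * D)
  have hUU : star U * U = 1 := (Matrix.mem_unitaryGroup_iff').mp hU
  rw [← heq, Matrix.mul_assoc]
  refine (re_trace_conjTranspose_mul_le C (D * star U)).trans ?_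
  have h3 : ((D * star U)ᴴ * (D * star U)).trace = (Dᴴ * D).trace := by
    rw [Matrix.conjTranspose_mul, Matrix.star_eq_conjTranspose,
      Matrix.conjTranspose_conjTranspose]
    simp only [← Matrix.mul_assoc]
    rw [Matrix.mul_assoc U Dᴴ D, ← Matrix.star_eq_conjTranspose U]
    exact trace_unitary_conj (Dᴴ * D) hU
  rw [h3]

lemma trNorm_polar_pair (A B : Matrix n n ℂ) :
    trNorm (Aᴴ * B) = trNorm (psdSqrt (A * Aᴴ) * psdSqrt (B * Bᴴ)) := by
  obtain ⟨UA, hUA, hA⟩ := exists_unitary_polar A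
  obtain ⟨UB, hUB, hB⟩ := exists_unitary_polar B
  have h1 : Aᴴ * B = star UA * (psdSqrt (A * Aᴴ) * psdSqrt (B * Bᴴ) * UB) := by
    conv_lhs => rw [hA, hB]
    rw [Matrix.conjTranspose_mul, ← Matrix.star_eq_conjTranspose UA, psdSqrt_herm]
    simp only [Matrix.mul_assoc]
  rw [h1, trNorm_unitary_mul _ (Unitary.star_mem hUA), trNorm_mul_unitary _ hUB]

lemma sqrt_sum_ineq {r s t u : ℝ} (hr : 0 ≤ r) (hs : 0 ≤ s) (ht : 0 ≤ t) (hu : 0 ≤ u) :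
    Real.sqrt (r * s) + Real.sqrt (t * u) ≤ Real.sqrt ((r + t) * (s + u)) := by
  have hnn : 0 ≤ Real.sqrt (r * s) + Real.sqrt (t * u) := by positivity
  rw [← Real.sqrt_sq hnn]
  apply Real.sqrt_le_sqrt
  have h1 : Real.sqrt (r * s) ^ 2 = r * s := Real.sq_sqrt (by positivity)
  have h2 : Real.sqrt (t * u) ^ 2 = t * u := Real.sq_sqrt (by positivity)
  have h3 : Real.sqrt (r * s) * Real.sqrt (t * u) = Real.sqrt (r * u) * Real.sqrt (t * s) := by
    rw [← Real.sqrt_mul (by positivity), ← Real.sqrt_mul (by positivity)]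
    congr 1
    ring
  nlinarith [h1, h2, h3, two_mul_le_add_sq (Real.sqrt (r * u)) (Real.sqrt (t * s)),
    Real.sq_sqrt (mul_nonneg hr hu), Real.sq_sqrt (mul_nonneg ht hs),
    Real.sqrt_nonneg (r * u), Real.sqrt_nonneg (t * s)]


end AuxLemmas

/-- Monotonicity of the generalized fidelity under projection-type maps: for
subnormalized `ρ, σ` and `0 ≤ P ≤ 1`, `F̄(PρP, PσP) ≥ F̄(ρ, σ)`, equivalently
`P(PρP, PσP) ≤ P(ρ, σ)`. -/
theorem genFid_conj_mono {n : Type*} [Fintype n] [DecidableEq n]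
    (ρ σ P : Matrix n n ℂ)
    (hρ : ρ.PosSemidef) (hρtr : ρ.trace.re ≤ 1)
    (hσ : σ.PosSemidef) (hσtr : σ.trace.re ≤ 1)
    (hP : P.PosSemidef) (hP1 : ((1 : Matrix n n ℂ) - P).PosSemidef) :
    genFid ρ σ ≤ genFid (P * ρ * P) (P * σ * P) ∧
    purDist (P * ρ * P) (P * σ * P) ≤ purDist ρ σ := by

  have hPH : Pᴴ = P := hP.1
  have hsP : psdSqrt P * psdSqrt P = P := psdSqrt_mul_self hP
  have hQps : ((1 : Matrix n n ℂ) - P * P).PosSemidef := by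
    have h1 : psdSqrt P * ((1 : Matrix n n ℂ) - P) * psdSqrt P = P - P * P := by
      rw [Matrix.mul_sub, Matrix.mul_one, Matrix.sub_mul, hsP]
      congr 1
      calc psdSqrt P * P * psdSqrt P
          = psdSqrt P * (psdSqrt P * psdSqrt P) * psdSqrt P := by rw [hsP]
        _ = (psdSqrt P * psdSqrt P) * (psdSqrt P * psdSqrt P) := by
            simp only [Matrix.mul_assoc]
        _ = P * P := by rw [hsP]
    have h2 : (1 : Matrix n n ℂ) - P * P =
        ((1 : Matrix n n ℂ) - P) + psdSqrt P * ((1 : Matrix n n ℂ) - P) * psdSqrt P := by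
      rw [h1]; abel
    rw [h2]
    refine hP1.add ?_
    have := hP1.mul_mul_conjTranspose_same (psdSqrt P)
    rwa [psdSqrt_herm] at this
  set Q : Matrix n n ℂ := (1 : Matrix n n ℂ) - P * P with hQdef
  have hPρP : (P * ρ * P).PosSemidef := by
    have := hρ.mul_mul_conjTranspose_same P; rwa [hPH] at this
  have hPσP : (P * σ * P).PosSemidef := by
    have := hσ.mul_mul_conjTranspose_same P; rwa [hPH] at this
  have htr : ∀ τ : Matrix n n ℂ, (Q * τ).trace = τ.trace - (P * τ * P).trace := by
    intro τ
    rw [hQdef, Matrix.sub_mul, Matrix.one_mul, Matrix.trace_sub,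
      Matrix.trace_mul_cycle P τ P]
  have tnn : ∀ {τ : Matrix n n ℂ}, τ.PosSemidef → 0 ≤ ((Q * τ).trace).re := by
    intro τ hτ
    have h5 : (Q * τ).trace = (psdSqrt Q * τ * psdSqrt Q).trace := by
      conv_lhs => rw [← psdSqrt_mul_self hQps]
      rw [Matrix.mul_assoc, Matrix.trace_mul_comm (psdSqrt Q) (psdSqrt Q * τ),
        Matrix.mul_assoc]
    rw [h5]
    refine trace_re_nonneg ?_
    have := hτ.mul_mul_conjTranspose_same (psdSqrt Q)
    rwa [psdSqrt_herm] at this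
  have ht : 0 ≤ ((Q * ρ).trace).re := tnn hρ
  have hu : 0 ≤ ((Q * σ).trace).re := tnn hσ
  have hr : 0 ≤ 1 - ρ.trace.re := by linarith
  have hs : 0 ≤ 1 - σ.trace.re := by linarith
  have htPρ : 1 - ((P * ρ * P).trace).re = (1 - ρ.trace.re) + ((Q * ρ).trace).re := by
    have := congrArg Complex.re (htr ρ); rw [Complex.sub_re] at this; linarith [this.le, this.ge]
  have htPσ : 1 - ((P * σ * P).trace).re = (1 - σ.trace.re) + ((Q * σ).trace).re := by
    have := congrArg Complex.re (htr σ); rw [Complex.sub_re] at this; linarith [this.le, this.ge]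
  -- key trace-norm inequality
  have key : trNorm (psdSqrt ρ * psdSqrt σ) ≤
      trNorm (psdSqrt (P * ρ * P) * psdSqrt (P * σ * P)) +
        Real.sqrt ((Q * ρ).trace).re * Real.sqrt ((Q * σ).trace).re := by
    have hPQ : P * P + Q = 1 := by rw [hQdef]; abel
    have hsplit : psdSqrt ρ * psdSqrt σ =
        (P * psdSqrt ρ)ᴴ * (P * psdSqrt σ) +
          (psdSqrt Q * psdSqrt ρ)ᴴ * (psdSqrt Q * psdSqrt σ) := by
      rw [Matrix.conjTranspose_mul, Matrix.conjTranspose_mul, psdSqrt_herm, psdSqrt_herm,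
        hPH]
      simp only [← Matrix.mul_assoc]
      rw [← Matrix.add_mul, Matrix.mul_assoc (psdSqrt ρ) P P,
        Matrix.mul_assoc (psdSqrt ρ) (psdSqrt Q) (psdSqrt Q), psdSqrt_mul_self hQps,
        ← Matrix.mul_add, hPQ, Matrix.mul_one]
    rw [hsplit]
    refine (trNorm_triangle _ _).trans ?_
    apply add_le_add
    · have e1 : (P * psdSqrt ρ) * (P * psdSqrt ρ)ᴴ = P * ρ * P := by
        rw [Matrix.conjTranspose_mul, psdSqrt_herm, hPH,
          Matrix.mul_assoc P (psdSqrt ρ) (psdSqrt ρ * P),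
          ← Matrix.mul_assoc (psdSqrt ρ) (psdSqrt ρ) P, psdSqrt_mul_self hρ,
          ← Matrix.mul_assoc]
      have e2 : (P * psdSqrt σ) * (P * psdSqrt σ)ᴴ = P * σ * P := by
        rw [Matrix.conjTranspose_mul, psdSqrt_herm, hPH,
          Matrix.mul_assoc P (psdSqrt σ) (psdSqrt σ * P),
          ← Matrix.mul_assoc (psdSqrt σ) (psdSqrt σ) P, psdSqrt_mul_self hσ,
          ← Matrix.mul_assoc]
      rw [trNorm_polar_pair (P * psdSqrt ρ) (P * psdSqrt σ), e1, e2]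
    · refine (trNorm_conjTranspose_mul_le _ _).trans ?_
      have f : ∀ (τ : Matrix n n ℂ), τ.PosSemidef →
          ((psdSqrt Q * psdSqrt τ)ᴴ * (psdSqrt Q * psdSqrt τ)).trace = (Q * τ).trace := by
        intro τ hτ
        rw [Matrix.conjTranspose_mul, psdSqrt_herm, psdSqrt_herm,
          Matrix.trace_mul_comm (psdSqrt τ * psdSqrt Q) (psdSqrt Q * psdSqrt τ)]
        simp only [← Matrix.mul_assoc]
        rw [Matrix.mul_assoc (psdSqrt Q) (psdSqrt τ) (psdSqrt τ), psdSqrt_mul_self hτ,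
          Matrix.trace_mul_cycle (psdSqrt Q) τ (psdSqrt Q), psdSqrt_mul_self hQps]
      rw [f ρ hρ, f σ hσ]
  have hgen : genFid ρ σ ≤ genFid (P * ρ * P) (P * σ * P) := by
    unfold genFid
    rw [htPρ, htPσ]
    have hnum := sqrt_sum_ineq hr hs ht hu
    have hQmul : Real.sqrt (((Q * ρ).trace).re * ((Q * σ).trace).re) =
        Real.sqrt ((Q * ρ).trace).re * Real.sqrt ((Q * σ).trace).re :=
      Real.sqrt_mul ht _
    linarith [key]
  refine ⟨hgen, ?_⟩
  unfold purDist
  apply Real.sqrt_le_sqrt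
  have h0 : 0 ≤ genFid ρ σ := add_nonneg (trNorm_nonneg _) (Real.sqrt_nonneg _)
  nlinarith [hgen, h0]
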